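/- If for every a > 0 there exist δ(a) > 0 such that for all 0 < δ < δ(a) there exists n with: Alice wins the (1−δ, n)-sided-game with cost μ(A) ≤ 1 − a·δ, then for every c < 1 and ε > 0 there exists n such that Alice wins the (c, n)-sided-game with cost μ(A) ≤ ε. (The derivation: choose a, δ, k with (1−aδ)^k ≤ ε and (1−δ)^k ≥ c, then apply the nesting claim k times.) -/

import Mathlib

open Finset

/-- `M` is a (nonnegative) supermartingale on binary strings. -/
def IsSuperM (M : List Bool → ℝ) : Prop :=
  (∀ σ, 0 ≤ M σ) ∧ ∀ σ, M (σ ++ [false]) + M (σ ++ [true]) ≤ 2 * M σ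

/-- `M` is `b`-sided: at every string it favors the outcome `b`. -/
def SidedAt (b : Bool) (M : List Bool → ℝ) : Prop :=
  ∀ σ, M (σ ++ [!b]) ≤ M (σ ++ [b])

/-- The moves of a strategy against an adversary play: at round `t` Alice plays
the string given by her strategy applied to the history of adversary responses. -/
def movesOf (strat : List ((List Bool → ℝ) × (List Bool → ℝ)) → List Bool)
    (resp : ℕ → (List Bool → ℝ) × (List Bool → ℝ)) (t : ℕ) : List Bool :=
  strat (List.ofFn (fun j : Fin t => resp j))

/-- The adversary play `resp` is valid against moves `moves` in the `(c,n)`-sided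
game: at each round the adversary presents a `0`-sided and a `1`-sided
supermartingale, nondecreasing in time on `2^{≤n}`, catching every string
enumerated so far (some prefix `ρ` has `‖M⃗[t](ρ)‖₁ ≥ 1`). -/
def ValidResp (n : ℕ) (moves : ℕ → List Bool)
    (resp : ℕ → (List Bool → ℝ) × (List Bool → ℝ)) : Prop :=
  ∀ t : ℕ,
    IsSuperM (resp t).1 ∧ IsSuperM (resp t).2 ∧
    SidedAt false (resp t).1 ∧ SidedAt true (resp t).2 ∧
    (∀ s ≤ t, ∀ σ : List Bool, σ.length ≤ n →
      (resp s).1 σ ≤ (resp t).1 σ ∧ (resp s).2 σ ≤ (resp t).2 σ) ∧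
    (∀ s ≤ t, ∃ ρ : List Bool, ρ <+: moves s ∧ 1 ≤ (resp t).1 ρ + (resp t).2 ρ)

/-- Alice wins the `(c,n)`-sided-game with cost at most `ε`: she has a strategy
enumerating distinct strings of length `n` that forces, against every valid
adversary play, `‖M⃗[t](ε)‖₁ ≥ c` at some round `t`, with the measure of the
strings enumerated by round `t` at most `ε`. -/
def Wins (c : ℝ) (n : ℕ) (ε : ℝ) : Prop :=
  ∃ strat : List ((List Bool → ℝ) × (List Bool → ℝ)) → List Bool,
    (∀ resp t, (movesOf strat resp t).length = n) ∧
    ∀ resp, ValidResp n (movesOf strat resp) resp →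
      ∃ t : ℕ, c ≤ (resp t).1 [] + (resp t).2 [] ∧
        (Function.Injective fun s : Fin (t + 1) => movesOf strat resp s) ∧
        ((t + 1 : ℕ) : ℝ) * ((2 : ℝ)⁻¹) ^ n ≤ ε


/- ### Auxiliary development -/


abbrev SGP : Type := (List Bool → ℝ) × (List Bool → ℝ)

lemma ofFn_hist_succ {α : Type*} (f : ℕ → α) (t : ℕ) :
    List.ofFn (fun j : Fin (t+1) => f j) = List.ofFn (fun j : Fin t => f j) ++ [f t] := by
  rw [List.ofFn_succ']; simp [List.concat_eq_append]

lemma superM_step {M : List Bool → ℝ} (hM : IsSuperM M) (σ : List Bool) (b : Bool) :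
    M (σ ++ [b]) ≤ 2 * M σ := by
  have h1 := hM.2 σ; have h2 := hM.1 (σ ++ [false]); have h3 := hM.1 (σ ++ [true])
  cases b <;> linarith

lemma superM_growth {M : List Bool → ℝ} (hM : IsSuperM M) (σ τ : List Bool) :
    M (σ ++ τ) ≤ 2 ^ τ.length * M σ := by
  induction τ using List.reverseRecOn with
  | nil => simp
  | append_singleton τ b ih =>
      have h1 : M (σ ++ (τ ++ [b])) ≤ 2 * M (σ ++ τ) := by
        rw [← List.append_assoc]; exact superM_step hM _ b
      calc M (σ ++ (τ ++ [b])) ≤ 2 * M (σ ++ τ) := h1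
        _ ≤ 2 * (2 ^ τ.length * M σ) := by linarith
        _ = 2 ^ (τ ++ [b]).length * M σ := by
            simp [pow_succ]; ring

lemma superM_res {f : List Bool → ℝ} (h : IsSuperM f) (σ : List Bool) :
    IsSuperM fun τ => f (σ ++ τ) :=
  ⟨fun τ => h.1 _, fun τ => by simpa [List.append_assoc] using h.2 (σ ++ τ)⟩

lemma sided_res {f : List Bool → ℝ} {b : Bool} (h : SidedAt b f) (σ : List Bool) :
    SidedAt b fun τ => f (σ ++ τ) := fun τ => by
  simpa [List.append_assoc] using h (σ ++ τ)

lemma superM_div {f : List Bool → ℝ} (h : IsSuperM f) {c : ℝ} (hc : 0 < c) :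
    IsSuperM fun ρ => f ρ / c := by
  refine ⟨fun ρ => div_nonneg (h.1 ρ) hc.le, fun ρ => ?_⟩
  rw [← add_div]
  have := h.2 ρ
  rw [div_le_iff₀ hc]
  calc f (ρ ++ [false]) + f (ρ ++ [true]) ≤ 2 * f ρ := h.2 ρ
    _ = 2 * (f ρ / c) * c := by field_simp

lemma sided_div {f : List Bool → ℝ} {b : Bool} (h : SidedAt b f) {c : ℝ} (hc : 0 < c) :
    SidedAt b fun ρ => f ρ / c := fun σ => div_le_div_of_nonneg_right (h σ) hc.le

lemma superM_const {B : ℝ} (hB : 0 ≤ B) : IsSuperM fun _ => B :=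
  ⟨fun _ => hB, fun _ => by linarith⟩

lemma sided_const {B : ℝ} {b : Bool} : SidedAt b fun _ => B := fun _ => le_rfl

lemma prefix_split {ρ σ τ : List Bool} (h : ρ <+: σ ++ τ) :
    ρ <+: σ ∨ ∃ ρ', ρ = σ ++ ρ' ∧ ρ' <+: τ := by
  rcases (List.prefix_or_prefix_of_prefix h (List.prefix_append σ τ)) with h1 | h1
  · exact Or.inl h1
  · obtain ⟨ρ', rfl⟩ := h1
    exact Or.inr ⟨ρ', rfl, (List.prefix_append_right_inj σ).mp h⟩

lemma strat_len {strat : List SGP → List Bool} {n : ℕ}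
    (h : ∀ resp t, (movesOf strat resp t).length = n) (l : List SGP) :
    (strat l).length = n := by
  have heq : (List.ofFn fun j : Fin l.length =>
      (fun k => l.getD k ((fun _ => (0:ℝ)), fun _ => (0:ℝ))) (j : ℕ)) = l := by
    apply List.ext_getElem <;> simp [List.getD_eq_getElem]
  have h2 := h (fun k => l.getD k ((fun _ => (0:ℝ)), fun _ => (0:ℝ))) l.length
  rw [movesOf, heq] at h2; exact h2

/-- Phase-end predicate. -/
def nE (c₁ : ℝ) (σ : List Bool) (M : SGP) : Prop :=
  c₁ ≤ M.1 σ + M.2 σ ∨ ∃ ρ, ρ <+: σ ∧ (1:ℝ) ≤ M.1 ρ + M.2 ρ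

noncomputable def ndiv (c₁ : ℝ) (M : SGP) : SGP := (fun ρ => M.1 ρ / c₁, fun ρ => M.2 ρ / c₁)

def nres (σ : List Bool) (M : SGP) : SGP := (fun τ => M.1 (σ ++ τ), fun τ => M.2 (σ ++ τ))

open Classical in
noncomputable def nstep (s0 : List SGP → List Bool) (c₁ : ℝ)
    (S : List SGP × List SGP) (M : SGP) : List SGP × List SGP :=
  if nE c₁ (s0 S.1) M then (S.1 ++ [ndiv c₁ M], []) else (S.1, S.2 ++ [nres (s0 S.1) M])

noncomputable def nstat (s0 : List SGP → List Bool) (c₁ : ℝ) (h : List SGP) :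
    List SGP × List SGP := h.foldl (nstep s0 c₁) ([], [])

noncomputable def nO (s0 : List SGP → List Bool) (c₁ : ℝ) (resp : ℕ → SGP) (t : ℕ) :
    List SGP := (nstat s0 c₁ (List.ofFn fun j : Fin t => resp j)).1

noncomputable def nI (s0 : List SGP → List Bool) (c₁ : ℝ) (resp : ℕ → SGP) (t : ℕ) :
    List SGP := (nstat s0 c₁ (List.ofFn fun j : Fin t => resp j)).2

lemma nstat_succ (s0 : List SGP → List Bool) (c₁ : ℝ) (resp : ℕ → SGP) (t : ℕ) :
    nstat s0 c₁ (List.ofFn fun j : Fin (t+1) => resp j)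
      = nstep s0 c₁ (nO s0 c₁ resp t, nI s0 c₁ resp t) (resp t) := by
  rw [ofFn_hist_succ]
  simp [nstat, nO, nI, List.foldl_append]

lemma nOI_zero (s0 : List SGP → List Bool) (c₁ : ℝ) (resp : ℕ → SGP) :
    nO s0 c₁ resp 0 = [] ∧ nI s0 c₁ resp 0 = [] := by
  constructor <;> simp [nO, nI, nstat]

lemma nOI_succ_pos {s0 : List SGP → List Bool} {c₁ : ℝ} {resp : ℕ → SGP} {t : ℕ}
    (h : nE c₁ (s0 (nO s0 c₁ resp t)) (resp t)) :
    nO s0 c₁ resp (t+1) = nO s0 c₁ resp t ++ [ndiv c₁ (resp t)]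
      ∧ nI s0 c₁ resp (t+1) = [] := by
  have h1 : nO s0 c₁ resp (t+1) = (nstat s0 c₁ (List.ofFn fun j : Fin (t+1) => resp j)).1 := rfl
  have h2 : nI s0 c₁ resp (t+1) = (nstat s0 c₁ (List.ofFn fun j : Fin (t+1) => resp j)).2 := rfl
  rw [h1, h2, nstat_succ, nstep, if_pos h]
  exact ⟨rfl, rfl⟩

lemma nOI_succ_neg {s0 : List SGP → List Bool} {c₁ : ℝ} {resp : ℕ → SGP} {t : ℕ}
    (h : ¬ nE c₁ (s0 (nO s0 c₁ resp t)) (resp t)) :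
    nO s0 c₁ resp (t+1) = nO s0 c₁ resp t
      ∧ nI s0 c₁ resp (t+1) = nI s0 c₁ resp t ++ [nres (s0 (nO s0 c₁ resp t)) (resp t)] := by
  have h1 : nO s0 c₁ resp (t+1) = (nstat s0 c₁ (List.ofFn fun j : Fin (t+1) => resp j)).1 := rfl
  have h2 : nI s0 c₁ resp (t+1) = (nstat s0 c₁ (List.ofFn fun j : Fin (t+1) => resp j)).2 := rfl
  rw [h1, h2, nstat_succ, nstep, if_neg h]
  exact ⟨rfl, rfl⟩

lemma wins_mono {c c' ε ε' : ℝ} {n : ℕ} (h : Wins c' n ε') (hc : c ≤ c') (hε : ε' ≤ ε) :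
    Wins c n ε := by
  obtain ⟨st, hl, hw⟩ := h
  refine ⟨st, hl, fun resp hv => ?_⟩
  obtain ⟨t, h1, h2, h3⟩ := hw resp hv
  exact ⟨t, le_trans hc h1, h2, le_trans h3 hε⟩

lemma wins_one : Wins 1 0 1 := by
  refine ⟨fun _ => [], fun resp t => rfl, fun resp hv => ?_⟩
  obtain ⟨ρ, hρ, h1⟩ := (hv 0).2.2.2.2.2 0 le_rfl
  have hρnil : ρ = [] := List.prefix_nil.mp hρ
  subst hρnil
  exact ⟨0, h1, fun a b _ => by omega, by norm_num⟩

lemma cost_le_iff {x ε : ℝ} {n : ℕ} : x * ((2:ℝ)⁻¹)^n ≤ ε ↔ x ≤ ε * 2^n := by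
  rw [inv_pow, ← div_eq_mul_inv, div_le_iff₀ (by positivity : (0:ℝ) < 2^n)]

noncomputable def nB (resp : ℕ → SGP) (σ : List Bool) (n₁ : ℕ) (t₀ N : ℕ) : ℝ :=
  1 + 2^n₁ * ∑ s ∈ Finset.range N, ((resp (t₀+s)).1 σ + (resp (t₀+s)).2 σ)

open Classical in
noncomputable def nir (resp : ℕ → SGP) (σ : List Bool) (n₁ : ℕ) (t₀ N u : ℕ) : SGP :=
  if u < N then nres σ (resp (t₀+u))
  else ((fun _ => nB resp σ n₁ t₀ N), (fun _ => nB resp σ n₁ t₀ N))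

lemma wins_nest {c₀ ε₀ c₁ ε₁ : ℝ} {n₀ n₁ : ℕ} (hc₁ : 0 < c₁) (hc₁' : c₁ ≤ 1)
    (W0 : Wins c₀ n₀ ε₀) (W1 : Wins c₁ n₁ ε₁) : Wins (c₀ * c₁) (n₀ + n₁) (ε₀ * ε₁) := by
  classical
  obtain ⟨s0, len0, win0⟩ := W0
  obtain ⟨s1, len1, win1⟩ := W1
  have L0 : ∀ l, (s0 l).length = n₀ := fun l => strat_len len0 l
  have L1 : ∀ l, (s1 l).length = n₁ := fun l => strat_len len1 l
  refine ⟨fun h => s0 (nstat s0 c₁ h).1 ++ s1 (nstat s0 c₁ h).2, ?_, ?_⟩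
  · intro resp t
    simp [movesOf, L0, L1]
  intro resp hv
  -- state evolution within a phase
  have evol : ∀ t₀, nI s0 c₁ resp t₀ = [] → ∀ u,
      (∀ v < u, ¬ nE c₁ (s0 (nO s0 c₁ resp t₀)) (resp (t₀+v))) →
      nO s0 c₁ resp (t₀+u) = nO s0 c₁ resp t₀ ∧
      nI s0 c₁ resp (t₀+u)
        = List.ofFn (fun j : Fin u => nres (s0 (nO s0 c₁ resp t₀)) (resp (t₀+(j:ℕ)))) := by
    intro t₀ h0 u
    induction u with
    | zero => intro _; exact ⟨rfl, by simpa using h0⟩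
    | succ u ih =>
        intro hne
        obtain ⟨hO, hI⟩ := ih (fun v hv' => hne v (Nat.lt_succ_of_lt hv'))
        have hneu : ¬ nE c₁ (s0 (nO s0 c₁ resp (t₀+u))) (resp (t₀+u)) := by
          rw [hO]; exact hne u (Nat.lt_succ_self u)
        have hstep := nOI_succ_neg hneu
        refine ⟨?_, ?_⟩
        · rw [show t₀ + (u+1) = (t₀+u)+1 from rfl, hstep.1, hO]
        · rw [show t₀ + (u+1) = (t₀+u)+1 from rfl, hstep.2, hI, hO]
          exact (ofFn_hist_succ (fun j => nres (s0 (nO s0 c₁ resp t₀)) (resp (t₀+j))) u).symm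
  -- the phase lemma
  have phase : ∀ t₀ : ℕ, ∃ uE : ℕ, nI s0 c₁ resp t₀ = [] →
      ((∀ v < uE, ¬ nE c₁ (s0 (nO s0 c₁ resp t₀)) (resp (t₀+v))) ∧
       nE c₁ (s0 (nO s0 c₁ resp t₀)) (resp (t₀+uE)) ∧
       ((uE+1 : ℕ) : ℝ) * ((2:ℝ)⁻¹)^n₁ ≤ ε₁ ∧
       Function.Injective (fun u : Fin (uE+1) => s1 (nI s0 c₁ resp (t₀+(u:ℕ))))) := by
    intro t₀
    by_cases h0 : nI s0 c₁ resp t₀ = []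
    case neg => exact ⟨0, fun h => absurd h h0⟩
    set σ : List Bool := s0 (nO s0 c₁ resp t₀) with hσdef
    have hσlen : σ.length = n₀ := L0 _
    have hsum_nonneg : ∀ N, 0 ≤ ∑ s ∈ Finset.range N, ((resp (t₀+s)).1 σ + (resp (t₀+s)).2 σ) :=
      fun N => Finset.sum_nonneg (fun s _ => add_nonneg ((hv (t₀+s)).1.1 σ) ((hv (t₀+s)).2.1.1 σ))
    have hB1 : ∀ N, 1 ≤ nB resp σ n₁ t₀ N := by
      intro N
      have h1 := hsum_nonneg N
      have h2 : (0:ℝ) ≤ 2^n₁ := by positivity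
      unfold nB; nlinarith
    have hBub : ∀ N, ∀ s < N, ∀ τ : List Bool, τ.length ≤ n₁ →
        (resp (t₀+s)).1 (σ ++ τ) ≤ nB resp σ n₁ t₀ N
          ∧ (resp (t₀+s)).2 (σ ++ τ) ≤ nB resp σ n₁ t₀ N := by
      intro N s hs τ hτ
      have hle : (2:ℝ)^τ.length ≤ 2^n₁ := pow_le_pow_right₀ (by norm_num) hτ
      have hterm : ((resp (t₀+s)).1 σ + (resp (t₀+s)).2 σ)
          ≤ ∑ s ∈ Finset.range N, ((resp (t₀+s)).1 σ + (resp (t₀+s)).2 σ) :=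
        Finset.single_le_sum
          (fun i _ => add_nonneg ((hv (t₀+i)).1.1 σ) ((hv (t₀+i)).2.1.1 σ))
          (Finset.mem_range.mpr hs)
      have g1 := superM_growth (hv (t₀+s)).1 σ τ
      have g2 := superM_growth (hv (t₀+s)).2.1 σ τ
      have p1 := (hv (t₀+s)).1.1 σ
      have p2 := (hv (t₀+s)).2.1.1 σ
      have hp : (0:ℝ) < 2^τ.length := by positivity
      unfold nB
      constructor <;> nlinarith
    have hir_lt : ∀ N u, u < N → nir resp σ n₁ t₀ N u = nres σ (resp (t₀+u)) := by
      intro N u h; simp [nir, h]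
    have hir_ge : ∀ N u, ¬ (u < N) →
        nir resp σ n₁ t₀ N u
          = ((fun _ => nB resp σ n₁ t₀ N), (fun _ => nB resp σ n₁ t₀ N)) := by
      intro N u h; simp [nir, h]
    have moves_ir : ∀ N, (∀ v < N, ¬ nE c₁ σ (resp (t₀+v))) → ∀ s ≤ N,
        movesOf s1 (nir resp σ n₁ t₀ N) s = s1 (nI s0 c₁ resp (t₀+s)) := by
      intro N hno s hsN
      have hI := (evol t₀ h0 s (fun v hv' => hno v (lt_of_lt_of_le hv' hsN))).2
      rw [movesOf, hI]
      have hfn : (fun j : Fin s => nir resp σ n₁ t₀ N (j:ℕ))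
          = (fun j : Fin s => nres σ (resp (t₀+(j:ℕ)))) :=
        funext fun j => hir_lt N j (lt_of_lt_of_le j.isLt hsN)
      rw [hfn]
    have hval : ∀ N, (∀ v < N, ¬ nE c₁ σ (resp (t₀+v))) →
        ValidResp n₁ (movesOf s1 (nir resp σ n₁ t₀ N)) (nir resp σ n₁ t₀ N) := by
      intro N hno u
      by_cases hu : u < N
      · rw [hir_lt N u hu]
        refine ⟨superM_res (hv (t₀+u)).1 σ, superM_res (hv (t₀+u)).2.1 σ,
          sided_res (hv (t₀+u)).2.2.1 σ, sided_res (hv (t₀+u)).2.2.2.1 σ, ?_, ?_⟩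
        · intro s hs τ hτ
          rw [hir_lt N s (lt_of_le_of_lt hs hu)]
          exact (hv (t₀+u)).2.2.2.2.1 (t₀+s) (by omega) (σ ++ τ)
            (by rw [List.length_append, hσlen]; omega)
        · intro s hs
          obtain ⟨ρ, hρ, h1⟩ := (hv (t₀+u)).2.2.2.2.2 (t₀+s) (by omega)
          have hOs := (evol t₀ h0 s (fun v hv' => hno v (by omega))).1
          have hmv : movesOf (fun h => s0 (nstat s0 c₁ h).1 ++ s1 (nstat s0 c₁ h).2) resp (t₀+s)
              = σ ++ s1 (nI s0 c₁ resp (t₀+s)) := by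
            show s0 (nO s0 c₁ resp (t₀+s)) ++ s1 (nI s0 c₁ resp (t₀+s)) = _
            rw [hOs]
          rw [hmv] at hρ
          rcases prefix_split hρ with hcase | ⟨ρ', rfl, hρ'⟩
          · exact absurd (Or.inr ⟨ρ, hcase, h1⟩) (hno u hu)
          · refine ⟨ρ', ?_, h1⟩
            rw [moves_ir N hno s (by omega)]; exact hρ'
      · rw [hir_ge N u hu]
        have hBN := hB1 N
        refine ⟨superM_const (le_trans zero_le_one hBN), superM_const (le_trans zero_le_one hBN),
          sided_const, sided_const, ?_, ?_⟩
        · intro s hs τ hτ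
          by_cases hsN : s < N
          · rw [hir_lt N s hsN]
            exact hBub N s hsN τ hτ
          · rw [hir_ge N s hsN]
            exact ⟨le_rfl, le_rfl⟩
        · intro s hs
          exact ⟨[], List.nil_prefix, by linarith⟩
    -- existence of a phase end
    have hex : ∃ u, nE c₁ σ (resp (t₀+u)) := by
      by_contra hno'
      push_neg at hno'
      obtain ⟨uw, hcw, -, hcostw⟩ := win1 (nir resp σ n₁ t₀ ⌈ε₁ * 2^n₁⌉₊)
        (hval ⌈ε₁ * 2^n₁⌉₊ (fun v _ => hno' v))
      by_cases hlt : uw < ⌈ε₁ * 2^n₁⌉₊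
      · refine hno' uw (Or.inl ?_)
        rw [hir_lt _ uw hlt] at hcw
        simpa [nres] using hcw
      · rw [cost_le_iff] at hcostw
        have h3 : (ε₁ * 2^n₁) ≤ (⌈ε₁ * 2^n₁⌉₊ : ℝ) := Nat.le_ceil _
        have h4 : ((⌈ε₁ * 2^n₁⌉₊ : ℕ) : ℝ) ≤ (uw : ℝ) := Nat.cast_le.mpr (not_lt.mp hlt)
        push_cast at hcostw
        linarith
    obtain ⟨uE, hEuE, hmin⟩ : ∃ uE, nE c₁ σ (resp (t₀+uE)) ∧
        ∀ v < uE, ¬ nE c₁ σ (resp (t₀+v)) :=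
      ⟨Nat.find hex, Nat.find_spec hex, fun v hv' => Nat.find_min hex hv'⟩
    obtain ⟨uw, hcw, hinjw, hcostw⟩ := win1 (nir resp σ n₁ t₀ uE) (hval uE hmin)
    have huEw : uE ≤ uw := by
      by_contra hlt
      push_neg at hlt
      refine hmin uw hlt (Or.inl ?_)
      rw [hir_lt uE uw hlt] at hcw
      simpa [nres] using hcw
    refine ⟨uE, fun _ => ⟨hmin, hEuE, ?_, ?_⟩⟩
    · rw [cost_le_iff] at hcostw ⊢
      have : ((uE:ℝ)+1) ≤ ((uw:ℝ)+1) := by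
        have := (Nat.cast_le (α := ℝ)).mpr huEw; linarith
      push_cast at hcostw ⊢
      linarith
    · intro a b hab
      have ha' : movesOf s1 (nir resp σ n₁ t₀ uE) (a:ℕ) = s1 (nI s0 c₁ resp (t₀+(a:ℕ))) :=
        moves_ir uE hmin a (by omega)
      have hb' : movesOf s1 (nir resp σ n₁ t₀ uE) (b:ℕ) = s1 (nI s0 c₁ resp (t₀+(b:ℕ))) :=
        moves_ir uE hmin b (by omega)
      have hfin : (⟨(a:ℕ), by omega⟩ : Fin (uw+1)) = ⟨(b:ℕ), by omega⟩ := by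
        apply hinjw
        show movesOf s1 (nir resp σ n₁ t₀ uE) (a:ℕ) = movesOf s1 (nir resp σ n₁ t₀ uE) (b:ℕ)
        rw [ha', hb']
        exact hab
      exact Fin.ext (by simpa using congrArg Fin.val hfin)
  -- global bookkeeping
  choose pend hpend using phase
  set start : ℕ → ℕ := fun i => Nat.rec 0 (fun _ s => s + pend s + 1) i with hstartdef
  have start_succ : ∀ i, start (i+1) = start i + pend (start i) + 1 := fun i => rfl
  have start_mono : Monotone start :=
    monotone_nat_of_le_succ (fun i => by rw [start_succ]; omega)
  have start_ge : ∀ i, i ≤ start i := by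
    intro i
    induction i with
    | zero => exact Nat.zero_le _
    | succ i ih => rw [start_succ]; omega
  have reset : ∀ i, nI s0 c₁ resp (start i) = [] ∧
      nO s0 c₁ resp (start i)
        = List.ofFn (fun j : Fin i => ndiv c₁ (resp (start (j:ℕ) + pend (start (j:ℕ))))) := by
    intro i
    induction i with
    | zero =>
        have h00 : start 0 = 0 := rfl
        exact ⟨by rw [h00]; exact (nOI_zero s0 c₁ resp).2,
          by rw [h00, (nOI_zero s0 c₁ resp).1]; simp⟩
    | succ i ih =>
        obtain ⟨hminP, hE, -, -⟩ := hpend (start i) ih.1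
        obtain ⟨hO, -⟩ := evol (start i) ih.1 (pend (start i)) hminP
        have hE' : nE c₁ (s0 (nO s0 c₁ resp (start i + pend (start i))))
            (resp (start i + pend (start i))) := by rw [hO]; exact hE
        have hstep := nOI_succ_pos hE'
        refine ⟨?_, ?_⟩
        · rw [start_succ]; exact hstep.2
        · rw [start_succ, hstep.1, hO, ih.2]
          exact (ofFn_hist_succ (fun j => ndiv c₁ (resp (start j + pend (start j)))) i).symm
  have endt_mono : ∀ {i j : ℕ}, i ≤ j →
      start i + pend (start i) ≤ start j + pend (start j) := by
    intro i j hij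
    rcases eq_or_lt_of_le hij with rfl | hlt
    · exact le_rfl
    · have h1 : start (i+1) ≤ start j := start_mono hlt
      rw [start_succ] at h1; omega
  have omoves : ∀ i, movesOf s0 (fun j => ndiv c₁ (resp (start j + pend (start j)))) i
      = s0 (nO s0 c₁ resp (start i)) := by
    intro i; rw [movesOf, (reset i).2]
  have ovalid : ValidResp n₀ (movesOf s0 (fun j => ndiv c₁ (resp (start j + pend (start j)))))
      (fun j => ndiv c₁ (resp (start j + pend (start j)))) := by
    intro j
    refine ⟨superM_div (hv _).1 hc₁, superM_div (hv _).2.1 hc₁,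
      sided_div (hv _).2.2.1 hc₁, sided_div (hv _).2.2.2.1 hc₁, ?_, ?_⟩
    · intro i hij ρ hρ
      have hm := (hv (start j + pend (start j))).2.2.2.2.1 (start i + pend (start i))
        (endt_mono hij) ρ (by omega)
      exact ⟨div_le_div_of_nonneg_right hm.1 hc₁.le, div_le_div_of_nonneg_right hm.2 hc₁.le⟩
    · intro i hij
      obtain ⟨hminP, hEP, -, -⟩ := hpend (start i) (reset i).1
      have hlen : (s0 (nO s0 c₁ resp (start i))).length = n₀ := L0 _
      rcases hEP with h | ⟨ρ, hρσ, h1⟩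
      · refine ⟨s0 (nO s0 c₁ resp (start i)), ?_, ?_⟩
        · rw [omoves i]
        · have hm := (hv (start j + pend (start j))).2.2.2.2.1 (start i + pend (start i))
            (endt_mono hij) (s0 (nO s0 c₁ resp (start i))) (by omega)
          show (1:ℝ) ≤ (resp (start j + pend (start j))).1 _ / c₁
            + (resp (start j + pend (start j))).2 _ / c₁
          rw [← add_div, one_le_div hc₁]
          linarith [hm.1, hm.2]
      · refine ⟨ρ, ?_, ?_⟩
        · rw [omoves i]; exact hρσ
        · have hm := (hv (start j + pend (start j))).2.2.2.2.1 (start i + pend (start i))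
            (endt_mono hij) ρ (by have := hρσ.length_le; omega)
          show (1:ℝ) ≤ (resp (start j + pend (start j))).1 ρ / c₁
            + (resp (start j + pend (start j))).2 ρ / c₁
          rw [← add_div, one_le_div hc₁]
          linarith [hm.1, hm.2]
  obtain ⟨tw, hcw0, hinj0, hcost0⟩ := win0 (fun j => ndiv c₁ (resp (start j + pend (start j)))) ovalid
  refine ⟨start tw + pend (start tw), ?_, ?_, ?_⟩
  · have h1 : c₀ ≤ ((resp (start tw + pend (start tw))).1 []
        + (resp (start tw + pend (start tw))).2 []) / c₁ := by
      rw [add_div]; exact hcw0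
    calc c₀ * c₁ ≤ (((resp (start tw + pend (start tw))).1 []
          + (resp (start tw + pend (start tw))).2 []) / c₁) * c₁ := by nlinarith
      _ = _ := by field_simp
  · -- injectivity
    have decomp : ∀ s, s ≤ start tw + pend (start tw) →
        ∃ i u, i ≤ tw ∧ u ≤ pend (start i) ∧ s = start i + u := by
      intro s hs
      have h0 : start 0 ≤ s := Nat.zero_le s
      have hP : start (Nat.findGreatest (fun i => start i ≤ s) s) ≤ s :=
        Nat.findGreatest_spec (P := fun i => start i ≤ s) (n := s) (Nat.zero_le s) h0
      set i := Nat.findGreatest (fun i => start i ≤ s) s with hidef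
      have hnot : ¬ start (i+1) ≤ s := by
        intro hcon
        exact Nat.findGreatest_is_greatest (Nat.lt_succ_self i)
          (le_trans (start_ge (i+1)) hcon) hcon
      rw [start_succ] at hnot
      have hi_le : i ≤ tw := by
        by_contra hgt
        push_neg at hgt
        have h1 : start (tw+1) ≤ start i := start_mono hgt
        rw [start_succ] at h1
        omega
      exact ⟨i, s - start i, hi_le, by omega, by omega⟩
    intro a b hab
    obtain ⟨i, u, hi, hu, hs⟩ := decomp (a:ℕ) (by omega)
    obtain ⟨i', u', hi', hu', hs'⟩ := decomp (b:ℕ) (by omega)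
    have hMa : movesOf (fun h => s0 (nstat s0 c₁ h).1 ++ s1 (nstat s0 c₁ h).2) resp (a:ℕ)
        = s0 (nO s0 c₁ resp (start i)) ++ s1 (nI s0 c₁ resp (start i + u)) := by
      obtain ⟨hminP, -, -, -⟩ := hpend (start i) (reset i).1
      have hO := (evol (start i) (reset i).1 u (fun v hv' => hminP v (by omega))).1
      rw [hs]
      show s0 (nO s0 c₁ resp (start i + u)) ++ s1 (nI s0 c₁ resp (start i + u)) = _
      rw [hO]
    have hMb : movesOf (fun h => s0 (nstat s0 c₁ h).1 ++ s1 (nstat s0 c₁ h).2) resp (b:ℕ)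
        = s0 (nO s0 c₁ resp (start i')) ++ s1 (nI s0 c₁ resp (start i' + u')) := by
      obtain ⟨hminP, -, -, -⟩ := hpend (start i') (reset i').1
      have hO := (evol (start i') (reset i').1 u' (fun v hv' => hminP v (by omega))).1
      rw [hs']
      show s0 (nO s0 c₁ resp (start i' + u')) ++ s1 (nI s0 c₁ resp (start i' + u')) = _
      rw [hO]
    have hab' := hab
    rw [show ((fun s : Fin (start tw + pend (start tw) + 1) =>
        movesOf (fun h => s0 (nstat s0 c₁ h).1 ++ s1 (nstat s0 c₁ h).2) resp (s:ℕ)) a)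
        = movesOf (fun h => s0 (nstat s0 c₁ h).1 ++ s1 (nstat s0 c₁ h).2) resp (a:ℕ) from rfl] at hab'
    rw [hMa] at hab'
    rw [show ((fun s : Fin (start tw + pend (start tw) + 1) =>
        movesOf (fun h => s0 (nstat s0 c₁ h).1 ++ s1 (nstat s0 c₁ h).2) resp (s:ℕ)) b)
        = movesOf (fun h => s0 (nstat s0 c₁ h).1 ++ s1 (nstat s0 c₁ h).2) resp (b:ℕ) from rfl] at hab'
    rw [hMb] at hab'
    obtain ⟨hσeq, hτeq⟩ := List.append_inj hab' (by rw [L0, L0])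
    have hii' : i = i' := by
      have h1 : movesOf s0 (fun j => ndiv c₁ (resp (start j + pend (start j)))) i
          = movesOf s0 (fun j => ndiv c₁ (resp (start j + pend (start j)))) i' := by
        rw [omoves i, omoves i', hσeq]
      have h2 := hinj0 (a₁ := ⟨i, by omega⟩) (a₂ := ⟨i', by omega⟩) h1
      simpa using congrArg Fin.val h2
    subst hii'
    have huu' : u = u' := by
      obtain ⟨hminP, -, -, hinjP⟩ := hpend (start i) (reset i).1
      have h2 := hinjP (a₁ := ⟨u, by omega⟩) (a₂ := ⟨u', by omega⟩) hτeq
      simpa using congrArg Fin.val h2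
    exact Fin.ext (by omega)
  · -- cost
    have hX1 : (1:ℝ) ≤ ε₁ * 2^n₁ := by
      obtain ⟨-, -, hcst, -⟩ := hpend (start 0) (reset 0).1
      rw [cost_le_iff] at hcst
      have : (1:ℝ) ≤ ((pend (start 0) + 1 : ℕ) : ℝ) := by exact_mod_cast Nat.succ_le_succ (Nat.zero_le _)
      linarith
    have key : ∀ i, ((start i : ℕ) : ℝ) ≤ i * (ε₁ * 2^n₁) := by
      intro i
      induction i with
      | zero => simp [show start 0 = 0 from rfl]
      | succ i ih =>
          obtain ⟨-, -, hcst, -⟩ := hpend (start i) (reset i).1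
          rw [cost_le_iff] at hcst
          rw [start_succ]
          push_cast at hcst ⊢
          have : ((i:ℝ)+1) * (ε₁ * 2^n₁) = i * (ε₁ * 2^n₁) + (ε₁ * 2^n₁) := by ring
          linarith
    rw [cost_le_iff]
    have h1 : ((start tw + pend (start tw) + 1 : ℕ) : ℝ) ≤ ((tw:ℝ)+1) * (ε₁ * 2^n₁) := by
      have := key (tw+1)
      rw [start_succ] at this
      push_cast at this ⊢
      linarith
    rw [cost_le_iff] at hcost0
    push_cast at hcost0
    have h2 : ((tw:ℝ)+1) * (ε₁ * 2^n₁) ≤ (ε₀ * 2^n₀) * (ε₁ * 2^n₁) := by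
      have htw1 : (0:ℝ) ≤ (tw:ℝ)+1 := by positivity
      nlinarith
    have h3 : (ε₀ * 2^n₀) * (ε₁ * 2^n₁) = ε₀ * ε₁ * 2^(n₀+n₁) := by
      rw [pow_add]; ring
    linarith


/-- Claim 2.5: if for every `a > 0` there is `δ(a) > 0` such that for all
`0 < δ < δ(a)` Alice wins the `(1−δ,n)`-sided-game with cost `≤ 1 − a·δ`
for some `n`, then for every `c < 1` and `ε > 0` she wins the
`(c,n)`-sided-game with cost `≤ ε` for some `n`. -/
theorem amplification
    (H : ∀ a : ℝ, 0 < a → ∃ δ0 : ℝ, 0 < δ0 ∧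
      ∀ δ : ℝ, 0 < δ → δ < δ0 → ∃ n, Wins (1 - δ) n (1 - a * δ)) :
    ∀ c : ℝ, c < 1 → ∀ ε : ℝ, 0 < ε → ∃ n, Wins c n ε := by
  intro c hc ε hε
  set c' : ℝ := max c (1/2) with hc'def
  set ε' : ℝ := min ε (1/2) with hε'def
  have hc'1 : c' < 1 := max_lt hc (by norm_num)
  have hc'l : (1/2:ℝ) ≤ c' := le_max_right _ _
  have hcc' : c ≤ c' := le_max_left _ _
  have hε'pos : 0 < ε' := lt_min hε (by norm_num)
  have hε'le : ε' ≤ 1/2 := min_le_right _ _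
  have hε'ε : ε' ≤ ε := min_le_left _ _
  set γ : ℝ := 1 - c' with hγdef
  have hγpos : 0 < γ := by simp [hγdef]; linarith
  have hγle : γ ≤ 1/2 := by simp [hγdef]; linarith
  have hlog : 0 < Real.log (1/ε') := Real.log_pos (by rw [lt_div_iff₀ hε'pos]; linarith)
  set a : ℝ := 2 * Real.log (1/ε') / γ with hadef
  have ha : 0 < a := by positivity
  obtain ⟨δ0, hδ0, hH⟩ := H a ha
  set δ : ℝ := min δ0 (min (1/a) (γ/2)) / 2 with hδdef
  have hδpos : 0 < δ := by positivity
  have hδlt : δ < δ0 := by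
    have h1 : min δ0 (min (1/a) (γ/2)) ≤ δ0 := min_le_left _ _
    rw [hδdef]; linarith
  have hδa : a * δ ≤ 1 := by
    have h1 : min δ0 (min (1/a) (γ/2)) ≤ 1/a := le_trans (min_le_right _ _) (min_le_left _ _)
    have h2 : δ ≤ 1/a := by rw [hδdef]; linarith [(by positivity : (0:ℝ) < 1/a)]
    calc a * δ ≤ a * (1/a) := by nlinarith
      _ = 1 := by field_simp
  have hδγ : 2 * δ ≤ γ := by
    have h1 : min δ0 (min (1/a) (γ/2)) ≤ γ/2 := le_trans (min_le_right _ _) (min_le_right _ _)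
    rw [hδdef]; linarith
  have hδ1 : δ < 1 := by linarith
  set k : ℕ := ⌊γ/δ⌋₊ with hkdef
  have hk1 : (k:ℝ) ≤ γ/δ := Nat.floor_le (by positivity)
  have hkγ : γ/(2*δ) ≤ (k:ℝ) := by
    have h1 : (2:ℝ) ≤ γ/δ := by rw [le_div_iff₀ hδpos]; linarith
    have h2 : γ/(2*δ) = (γ/δ)/2 := by rw [div_div, mul_comm]
    have h3 : γ/δ - 1 < (k:ℝ) + 1 - 1 := by
      have := Nat.lt_floor_add_one (γ/δ); linarith
    linarith [Nat.lt_floor_add_one (γ/δ)]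
  have hck : c' ≤ (1-δ)^k := by
    have hbern : 1 + (k:ℝ) * (-δ) ≤ (1 + (-δ))^k := one_add_mul_le_pow (by linarith) k
    have hkδ : (k:ℝ) * δ ≤ γ := by
      rw [le_div_iff₀ hδpos] at hk1
      linarith
    have he1 : (1:ℝ) + (-δ) = 1 - δ := by ring
    rw [he1] at hbern
    have he2 : c' = 1 - γ := by rw [hγdef]; ring
    nlinarith
  have hεk : (1-a*δ)^k ≤ ε' := by
    have h1 : (0:ℝ) ≤ 1 - a*δ := by linarith
    have h2 : (1 - a*δ) ≤ Real.exp (-(a*δ)) := by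
      have := Real.add_one_le_exp (-(a*δ)); linarith
    have h3 : (1-a*δ)^k ≤ Real.exp (-(a*δ))^k := pow_le_pow_left₀ h1 h2 k
    rw [← Real.exp_nat_mul] at h3
    have h4 : Real.log (1/ε') ≤ a*δ*(k:ℝ) := by
      have hfact : a * γ / 2 = Real.log (1/ε') := by
        rw [hadef]; field_simp
      have h5 : a*δ*(γ/(2*δ)) ≤ a*δ*(k:ℝ) := mul_le_mul_of_nonneg_left hkγ (by positivity)
      have h6 : a*δ*(γ/(2*δ)) = a*γ/2 := by field_simp
      linarith
    have h7 : Real.exp ((k:ℝ) * -(a*δ)) ≤ Real.exp (- Real.log (1/ε')) := by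
      apply Real.exp_le_exp.mpr; nlinarith
    have h8 : Real.exp (- Real.log (1/ε')) = ε' := by
      rw [Real.exp_neg, Real.exp_log (by positivity)]
      field_simp
    linarith
  obtain ⟨n₀, W1⟩ := hH δ hδpos hδlt
  have Wk : ∀ m : ℕ, Wins ((1-δ)^m) (m * n₀) ((1-a*δ)^m) := by
    intro m
    induction m with
    | zero => simpa using wins_one
    | succ m ih =>
        have h := wins_nest (by linarith : (0:ℝ) < 1-δ) (by linarith : (1-δ:ℝ) ≤ 1) ih W1
        have e1 : (m+1) * n₀ = m * n₀ + n₀ := by ring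
        rw [pow_succ, pow_succ, e1]
        exact h
  exact ⟨k * n₀, wins_mono (Wk k) (le_trans hcc' hck) (le_trans hεk hε'ε)⟩
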